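/- arXiv:1704.03596 — 3 statements merged into one kernel-verified Lean document; each statement's English description precedes it below -/
import Mathlib

section
/- If Q is a finite set of points strictly inside a triangle uvw, all lying on one side of the line through u and v, then the edge uv is an edge of the convex hull of Q ∪ {u, v}, and removing uv from the convex hull boundary yields a convex chain from u to v contained in triangle uvw whose region between the chain and the two sides uw, wv contains no point of Q. -/
open Real Set

noncomputable section

namespace CHT6

/-- Points in the plane. -/
abbrev Pt := ℝ × ℝ

/-- Euclidean distance. -/
def dst (p q : Pt) : ℝ := Real.sqrt ((p.1 - q.1) ^ 2 + (p.2 - q.2) ^ 2)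

/-- Unsigned angle at `q` between segments `qp` and `qr`. -/
def ang (p q r : Pt) : ℝ :=
  Real.arccos (((p.1 - q.1) * (r.1 - q.1) + (p.2 - q.2) * (r.2 - q.2)) / (dst p q * dst r q))

/-- 2D cross product. -/
def crossP (a b : Pt) : ℝ := a.1 * b.2 - a.2 * b.1

/-- The segments `ab` and `cd` properly cross: their relative interiors meet. -/
def PCross (a b c d : Pt) : Prop := (openSegment ℝ a b ∩ openSegment ℝ c d).Nonempty

/-- `uz` is a constraint of `S`. -/
def Constr (S : Set (Pt × Pt)) (u z : Pt) : Prop := (u, z) ∈ S ∨ (z, u) ∈ S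

/-- `u` and `v` see each other: `uv` is a constraint or no constraint properly crosses it. -/
def CanSee (S : Set (Pt × Pt)) (u v : Pt) : Prop :=
  Constr S u v ∨ ∀ c ∈ S, ¬ PCross c.1 c.2 u v

/-- Rotation of the plane by angle `θ` about the origin. -/
def rot (θ : ℝ) (p : Pt) : Pt :=
  (Real.cos θ * p.1 - Real.sin θ * p.2, Real.sin θ * p.1 + Real.cos θ * p.2)

/-- `p` relative to `u`, rotated so that the positive cone `Cᵢ` becomes the upward cone. -/
def rel (i : ℕ) (u p : Pt) : Pt := rot (-(2 * Real.pi * i / 3)) (p - u)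

/-- `p` lies in the (open) positive cone `Cᵢ` of `u` (width π/3; `C₀` is upward vertical). -/
def inPos (i : ℕ) (u p : Pt) : Prop := Real.sqrt 3 * |(rel i u p).1| < (rel i u p).2

/-- `p` lies in the negative cone `C̄ᵢ` of `u`. -/
def inNeg (i : ℕ) (u p : Pt) : Prop := inPos i p u

/-- Length of the projection of `p` onto the bisector of the positive cone `Cᵢ` of `u`. -/
def projLen (i : ℕ) (u p : Pt) : ℝ := (rel i u p).2

/-- Projected distance of `p` from `u` for the negative cone `C̄ᵢ` of `u`. -/
def negProj (i : ℕ) (u p : Pt) : ℝ := projLen i p u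

/-- `p` and `q` are not strictly separated, within the cone `cone` at `u`, by a constraint
incident to `u`: they lie in a common (closed) subcone. -/
def SameSubIn (cone : Pt → Pt → Prop) (S : Set (Pt × Pt)) (u p q : Pt) : Prop :=
  ∀ z, Constr S u z → cone u z →
    ¬ (crossP (z - u) (p - u) * crossP (z - u) (q - u) < 0)

def SameSubPos (S : Set (Pt × Pt)) (i : ℕ) (u p q : Pt) : Prop := SameSubIn (inPos i) S u p q

def SameSubNeg (S : Set (Pt × Pt)) (i : ℕ) (u p q : Pt) : Prop := SameSubIn (inNeg i) S u p q

/-- General position: no two points of `P` define a line parallel to one of the six cone rays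
(slopes `0`, `√3`, `-√3`), and no three points of `P` are collinear. -/
def GenPos (P : Set Pt) : Prop :=
  (∀ p ∈ P, ∀ q ∈ P, p ≠ q →
    p.2 ≠ q.2 ∧ q.2 - p.2 ≠ Real.sqrt 3 * (q.1 - p.1) ∧
      q.2 - p.2 ≠ -(Real.sqrt 3 * (q.1 - p.1))) ∧
  (∀ p ∈ P, ∀ q ∈ P, ∀ r ∈ P, p ≠ q → q ≠ r → p ≠ r → ¬ Collinear ℝ ({p, q, r} : Set Pt))

/-- `v` is, among the vertices visible from `u` in the positive subcone of `u` containing `v`,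
the one minimizing the projection onto the cone bisector: `u` adds the edge `uv`. -/
def EdgeDir (P : Set Pt) (S : Set (Pt × Pt)) (u v : Pt) : Prop :=
  u ∈ P ∧ v ∈ P ∧ ∃ i < 3, inPos i u v ∧ CanSee S u v ∧
    ∀ w ∈ P, w ≠ u → inPos i u w → CanSee S u w → SameSubPos S i u v w →
      projLen i u v ≤ projLen i u w

/-- Edges of the constrained half-θ₆-graph. -/
def HEdge (P : Set Pt) (S : Set (Pt × Pt)) (u v : Pt) : Prop :=
  EdgeDir P S u v ∨ EdgeDir P S v u

/-- `f` is a path in the graph with edge relation `E`. -/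
def IsPath (E : Pt → Pt → Prop) {n : ℕ} (f : Fin (n + 1) → Pt) : Prop :=
  ∀ j : Fin n, E (f j.castSucc) (f j.succ)

/-- Euclidean length of a polygonal path. -/
def pathLen {n : ℕ} (f : Fin (n + 1) → Pt) : ℝ :=
  ∑ j : Fin n, dst (f j.castSucc) (f j.succ)

/-- `x` is a vertex of the canonical sequence of `u` in the negative cone `C̄ᵘᵢ`. -/
def CanonVert (P : Set Pt) (S : Set (Pt × Pt)) (i : ℕ) (u x : Pt) : Prop :=
  x ∈ P ∧ HEdge P S u x ∧ inNeg i u x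

/-- `v` and `w` are consecutive (in counterclockwise order) vertices of the canonical path of
`u` in a subcone of the negative cone `C̄ᵘᵢ`. -/
def ConsecCanon (P : Set Pt) (S : Set (Pt × Pt)) (i : ℕ) (u v w : Pt) : Prop :=
  CanonVert P S i u v ∧ CanonVert P S i u w ∧ SameSubNeg S i u v w ∧
  crossP (v - u) (w - u) > 0 ∧
  ∀ x ∈ P, CanonVert P S i u x → SameSubNeg S i u v x →
    ¬ (crossP (v - u) (x - u) > 0 ∧ crossP (x - u) (w - u) > 0)

/-- `x` is a closest canonical vertex of `u` in (a subcone of) the negative cone `C̄ᵘᵢ`,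
distances being measured by projection onto the cone bisector. -/
def ClosestCanon (P : Set Pt) (S : Set (Pt × Pt)) (i : ℕ) (u x : Pt) : Prop :=
  CanonVert P S i u x ∧
  ∀ y ∈ P, CanonVert P S i u y → SameSubNeg S i u x y → negProj i u x ≤ negProj i u y

/-- Edges of the bounded-degree graph `G₉`: canonical-path edges together with, for each
negative subcone, the edge to the closest canonical vertex. -/
def G9Edge (P : Set Pt) (S : Set (Pt × Pt)) (a b : Pt) : Prop :=
  (∃ u ∈ P, ∃ i < 3, ConsecCanon P S i u a b ∨ ConsecCanon P S i u b a) ∨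
  (∃ i < 3, ClosestCanon P S i a b ∨ ClosestCanon P S i b a)

/-- Coordinate of `p` along the right boundary direction `(1/2, √3/2)` of the upward cone. -/
def coordA (p : Pt) : ℝ := p.1 + p.2 / Real.sqrt 3

/-- Coordinate of `p` along the left boundary direction `(-1/2, √3/2)` of the upward cone. -/
def coordB (p : Pt) : ℝ := -p.1 + p.2 / Real.sqrt 3

end CHT6

namespace CHT6

lemma crossP_self (a : Pt) : crossP a a = 0 := by simp [crossP]; ring
lemma crossP_zero_right (a : Pt) : crossP a (0 : Pt) = 0 := by simp [crossP]
lemma crossP_zero_left (a : Pt) : crossP (0 : Pt) a = 0 := by simp [crossP]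
lemma crossP_sub_smul (a b m : Pt) (t : ℝ) :
    crossP a (b - t • m) = crossP a b - t * crossP a m := by
  simp [crossP, Prod.fst_sub, Prod.snd_sub, Prod.smul_fst, Prod.smul_snd, smul_eq_mul]
  ring
lemma crossP_combo (e x y q : Pt) (a b : ℝ) (hab : a + b = 1) :
    crossP e (a • x + b • y - q) = a * crossP e (x - q) + b * crossP e (y - q) := by
  have hb : b = 1 - a := by linarith
  subst hb
  simp [crossP, Prod.fst_sub, Prod.snd_sub, Prod.fst_add, Prod.snd_add, Prod.smul_fst,
    Prod.smul_snd, smul_eq_mul]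
  ring
lemma crossP_smul_self (e : Pt) (s : ℝ) : crossP e (s • e) = 0 := by
  simp [crossP, Prod.smul_fst, Prod.smul_snd, smul_eq_mul]; ring
lemma combo_on_line (u e x y : Pt) (a b s t : ℝ) (hab : a + b = 1)
    (hx : x = u + s • e) (hy : y = u + t • e) :
    a • x + b • y = u + (a * s + b * t) • e := by
  subst hx hy
  have hb : b = 1 - a := by linarith
  subst hb
  ext <;> simp [Prod.fst_add, Prod.snd_add, Prod.smul_fst, Prod.smul_snd, smul_eq_mul] <;> ring

/-- The linear functional `p ↦ c * crossP e p`. -/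
def ell (e : Pt) (c : ℝ) : Pt →ₗ[ℝ] ℝ where
  toFun p := c * (e.1 * p.2 - e.2 * p.1)
  map_add' a b := by
    simp [Prod.fst_add, Prod.snd_add]; ring
  map_smul' r a := by
    simp [Prod.smul_fst, Prod.smul_snd, smul_eq_mul]; ring

lemma ell_apply (e : Pt) (c : ℝ) (p : Pt) : ell e c p = c * (e.1 * p.2 - e.2 * p.1) := rfl

lemma g_eq_ell (e : Pt) (c : ℝ) (p q : Pt) :
    c * crossP e (p - q) = ell e c p - ell e c q := by
  simp [crossP, ell_apply, Prod.fst_sub, Prod.snd_sub]; ring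

/-- If a finite set `Q` lies strictly inside triangle `uvw` (in particular on the same side
of line `uv` as `w`), then `uv` is an edge of the convex hull of `Q ∪ {u, v}`: `u` and `v`
are extreme points, the segment `uv` lies on the boundary of that hull, the hull (whose
boundary minus `uv` is the convex chain) is contained in the triangle, and the region of the
triangle between the chain and the sides `uw`, `wv` contains no point of `Q`. -/
theorem stmt_1 (u v w : Pt) (hncol : ¬ Collinear ℝ ({u, v, w} : Set Pt))
    (Q : Set Pt) (hQfin : Q.Finite)
    (hQ : Q ⊆ interior (convexHull ℝ ({u, v, w} : Set Pt)))
    (hside : ∀ q ∈ Q, 0 < crossP (v - u) (q - u) * crossP (v - u) (w - u)) :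
    u ∈ Set.extremePoints ℝ (convexHull ℝ (Q ∪ {u, v})) ∧
    v ∈ Set.extremePoints ℝ (convexHull ℝ (Q ∪ {u, v})) ∧
    segment ℝ u v ⊆ frontier (convexHull ℝ (Q ∪ {u, v})) ∧
    convexHull ℝ (Q ∪ {u, v}) ⊆ convexHull ℝ ({u, v, w} : Set Pt) ∧
    ∀ q ∈ Q, q ∉ convexHull ℝ ({u, v, w} : Set Pt) \ convexHull ℝ (Q ∪ {u, v}) := by
  classical
  set c : ℝ := crossP (v - u) (w - u) with hcdef
  -- c ≠ 0 since u, v, w are not collinear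
  have hc : c ≠ 0 := by
    intro h0
    apply hncol
    rw [collinear_iff_of_mem (Set.mem_insert u {v, w})]
    rcases eq_or_ne v u with hvu | hvu
    · refine ⟨w - u, ?_⟩
      intro p hp
      simp only [Set.mem_insert_iff, Set.mem_singleton_iff] at hp
      rcases hp with h | h | h
      · exact ⟨0, by rw [h]; simp⟩
      · exact ⟨0, by rw [h, hvu]; simp⟩
      · exact ⟨1, by rw [h]; simp⟩
    · refine ⟨v - u, ?_⟩
      intro p hp
      simp only [Set.mem_insert_iff, Set.mem_singleton_iff] at hp
      have hcross : (v.1 - u.1) * (w.2 - u.2) - (v.2 - u.2) * (w.1 - u.1) = 0 := by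
        have := h0
        simp only [hcdef, crossP, Prod.fst_sub, Prod.snd_sub] at this
        linarith
      have hene : v - u ≠ 0 := sub_ne_zero.mpr hvu
      rcases hp with h | h | h
      · exact ⟨0, by rw [h]; simp⟩
      · exact ⟨1, by rw [h]; simp⟩
      · rcases eq_or_ne (v.1 - u.1) 0 with h1 | h1
        · have h2 : v.2 - u.2 ≠ 0 := by
            intro h2
            apply hene
            have e1 : (v - u).1 = 0 := by simp [Prod.fst_sub]; linarith
            have e2 : (v - u).2 = 0 := by simp [Prod.snd_sub]; linarith
            exact Prod.ext e1 e2
          have hw1 : w.1 - u.1 = 0 := by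
            rw [h1] at hcross
            rcases mul_eq_zero.mp (by linarith : (v.2 - u.2) * (w.1 - u.1) = 0) with hh | hh
            · exact absurd hh h2
            · exact hh
          refine ⟨(w.2 - u.2) / (v.2 - u.2), ?_⟩
          rw [h]
          have : w = ((w.2 - u.2) / (v.2 - u.2)) • (v - u) + u := by
            rw [Prod.ext_iff]
            constructor
            · simp only [Prod.fst_add, Prod.smul_fst, Prod.fst_sub, smul_eq_mul]
              rw [h1]
              simp; linarith
            · simp only [Prod.snd_add, Prod.smul_snd, Prod.snd_sub, smul_eq_mul]
              rw [div_mul_cancel₀ _ h2]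
              ring
          simpa using this
        · refine ⟨(w.1 - u.1) / (v.1 - u.1), ?_⟩
          rw [h]
          have : w = ((w.1 - u.1) / (v.1 - u.1)) • (v - u) + u := by
            rw [Prod.ext_iff]
            constructor
            · simp only [Prod.fst_add, Prod.smul_fst, Prod.fst_sub, smul_eq_mul]
              rw [div_mul_cancel₀ _ h1]
              ring
            · simp only [Prod.snd_add, Prod.smul_snd, Prod.snd_sub, smul_eq_mul]
              field_simp
              nlinarith [hcross]
          simpa using this
  have huv : u ≠ v := by
    rintro rfl
    apply hc
    rw [hcdef, sub_self, crossP_zero_left]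
  have hwu : w - u ≠ 0 := by
    intro h
    apply hc
    rw [hcdef, h, crossP_zero_right]
  have hene : v - u ≠ 0 := sub_ne_zero.mpr (Ne.symm huv)
  -- the affine functional g
  set g : Pt → ℝ := fun p => c * crossP (v - u) (p - u) with hgdef
  have hgu : g u = 0 := by simp [hgdef, sub_self, crossP_zero_right]
  have hgv : g v = 0 := by simp [hgdef, crossP_self]
  have hgQ : ∀ q ∈ Q, 0 < g q := by
    intro q hq
    have := hside q hq
    simp only [hgdef]
    rw [mul_comm]
    exact this
  have hgen : ∀ p ∈ Q ∪ ({u, v} : Set Pt), 0 ≤ g p := by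
    rintro p (hp | hp)
    · exact (hgQ p hp).le
    · rcases hp with rfl | rfl
      · exact hgu.ge
      · exact hgv.ge
  -- g is nonnegative on the hull
  have hlin : IsLinearMap ℝ (fun p : Pt => ell (v - u) c p) := (ell (v - u) c).isLinear
  have hH0 : ∀ x ∈ convexHull ℝ (Q ∪ ({u, v} : Set Pt)), 0 ≤ g x := by
    intro x hx
    have hconv : Convex ℝ {p : Pt | ell (v - u) c u ≤ ell (v - u) c p} :=
      convex_halfSpace_ge hlin _
    have hsub : Q ∪ ({u, v} : Set Pt) ⊆ {p : Pt | ell (v - u) c u ≤ ell (v - u) c p} := by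
      intro p hp
      have h := hgen p hp
      simp only [hgdef] at h
      rw [g_eq_ell] at h
      simp only [mem_setOf_eq]
      linarith
    have h := convexHull_min hsub hconv hx
    simp only [mem_setOf_eq] at h
    simp only [hgdef]
    rw [g_eq_ell]
    linarith
  -- points of the hull where g vanishes lie on segment uv
  have hface : ∀ x ∈ convexHull ℝ (Q ∪ ({u, v} : Set Pt)), g x = 0 → x ∈ segment ℝ u v := by
    intro x hx hx0
    rw [convexHull_eq] at hx
    obtain ⟨ι, t, wt, z, hw0, hw1, hz, hxeq⟩ := hx
    have hxs : x = ∑ i ∈ t, wt i • z i := by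
      rw [← hxeq, Finset.centerMass, hw1, inv_one, one_smul]
    have hellx : ell (v - u) c x = ∑ i ∈ t, wt i * ell (v - u) c (z i) := by
      rw [hxs, map_sum]
      exact Finset.sum_congr rfl fun i _ => by rw [map_smul, smul_eq_mul]
    have hsum : g x = ∑ i ∈ t, wt i * g (z i) := by
      rw [hgdef]
      simp only
      rw [g_eq_ell, hellx]
      have : ∀ i ∈ t, wt i * g (z i) = wt i * ell (v - u) c (z i) - wt i * ell (v - u) c u := by
        intro i _
        rw [hgdef]
        simp only
        rw [g_eq_ell]
        ring
      rw [Finset.sum_congr rfl this, Finset.sum_sub_distrib, ← Finset.sum_mul, hw1, one_mul]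
    have hterm : ∀ i ∈ t, wt i * g (z i) = 0 := by
      have h0 : ∑ i ∈ t, wt i * g (z i) = 0 := by rw [← hsum, hx0]
      exact (Finset.sum_eq_zero_iff_of_nonneg fun i hi =>
        mul_nonneg (hw0 i hi) (hgen _ (hz i hi))).mp h0
    have hkey : ∀ i ∈ t, wt i ≠ 0 → z i ∈ ({u, v} : Set Pt) := by
      intro i hi hwne
      rcases hz i hi with hq | h
      · exfalso
        have := hgQ _ hq
        have h1 : 0 < wt i := lt_of_le_of_ne (hw0 i hi) (Ne.symm hwne)
        nlinarith [hterm i hi]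
      · exact h
    rw [← convexHull_pair, ← hxeq, ← Finset.centerMass_filter_ne_zero]
    apply Finset.centerMass_mem_convexHull
    · intro i hi
      exact hw0 i (Finset.mem_filter.mp hi).1
    · rw [Finset.sum_filter_ne_zero, hw1]; norm_num
    · intro i hi
      obtain ⟨hit, hwne⟩ := Finset.mem_filter.mp hi
      exact hkey i hit hwne
  -- segment parametrization
  have hseg : ∀ x ∈ segment ℝ u v, ∃ s : ℝ, 0 ≤ s ∧ s ≤ 1 ∧ x = u + s • (v - u) := by
    intro x hx
    rw [segment_eq_image'] at hx
    obtain ⟨s, hs, hxe⟩ := hx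
    exact ⟨s, hs.1, hs.2, hxe.symm⟩
  -- affinity of g
  have hgaff : ∀ (a b : ℝ) (x y : Pt), a + b = 1 → g (a • x + b • y) = a * g x + b * g y := by
    intro a b x y hab
    rw [hgdef]
    simp only
    rw [crossP_combo _ _ _ _ _ _ hab]
    ring
  have hmemu : u ∈ convexHull ℝ (Q ∪ ({u, v} : Set Pt)) :=
    subset_convexHull ℝ _ (by simp)
  have hmemv : v ∈ convexHull ℝ (Q ∪ ({u, v} : Set Pt)) :=
    subset_convexHull ℝ _ (by simp)
  refine ⟨?_, ?_, ?_, ?_, ?_⟩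
  · -- u extreme
    rw [mem_extremePoints]
    refine ⟨hmemu, ?_⟩
    intro x hx y hy hu
    obtain ⟨a, b, ha, hb, hab, habu⟩ := hu
    have h0 : a * g x + b * g y = 0 := by rw [← hgaff a b x y hab, habu, hgu]
    have hgx0 : g x = 0 := by nlinarith [hH0 x hx, hH0 y hy]
    have hgy0 : g y = 0 := by nlinarith [hH0 x hx, hH0 y hy]
    obtain ⟨s, hs0, hs1, hxe⟩ := hseg x (hface x hx hgx0)
    obtain ⟨r, hr0, hr1, hye⟩ := hseg y (hface y hy hgy0)
    have hcomb : a • x + b • y = u + (a * s + b * r) • (v - u) :=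
      combo_on_line u (v - u) x y a b s r hab hxe hye
    have hz : (a * s + b * r) • (v - u) = 0 := by
      have h := habu
      rw [hcomb] at h
      rwa [add_eq_left] at h
    have hst : a * s + b * r = 0 := by
      rcases smul_eq_zero.mp hz with h | h
      · exact h
      · exact absurd h hene
    have hs' : s = 0 := by nlinarith
    have hr' : r = 0 := by nlinarith
    constructor
    · rw [hxe, hs']; simp
    · rw [hye, hr']; simp
  · -- v extreme
    rw [mem_extremePoints]
    refine ⟨hmemv, ?_⟩
    intro x hx y hy hv
    obtain ⟨a, b, ha, hb, hab, habv⟩ := hv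
    have h0 : a * g x + b * g y = 0 := by rw [← hgaff a b x y hab, habv, hgv]
    have hgx0 : g x = 0 := by nlinarith [hH0 x hx, hH0 y hy]
    have hgy0 : g y = 0 := by nlinarith [hH0 x hx, hH0 y hy]
    obtain ⟨s, hs0, hs1, hxe⟩ := hseg x (hface x hx hgx0)
    obtain ⟨r, hr0, hr1, hye⟩ := hseg y (hface y hy hgy0)
    have hcomb : a • x + b • y = u + (a * s + b * r) • (v - u) :=
      combo_on_line u (v - u) x y a b s r hab hxe hye
    have hveq : v = u + (1 : ℝ) • (v - u) := by rw [one_smul]; abel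
    have hz : ((a * s + b * r) - 1) • (v - u) = 0 := by
      rw [sub_smul, one_smul, sub_eq_zero]
      have h := habv
      rw [hcomb] at h
      have : u + (a * s + b * r) • (v - u) = u + (v - u) := by
        rw [h]; abel
      exact add_left_cancel this
    have hst : a * s + b * r = 1 := by
      rcases smul_eq_zero.mp hz with h | h
      · linarith [sub_eq_zero.mp h]
      · exact absurd h hene
    have hs' : s = 1 := by nlinarith
    have hr' : r = 1 := by nlinarith
    constructor
    · rw [hxe, hs', one_smul]; abel
    · rw [hye, hr', one_smul]; abel
  · -- frontier
    intro x hxseg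
    have hxH : x ∈ convexHull ℝ (Q ∪ ({u, v} : Set Pt)) :=
      (convex_convexHull ℝ _).segment_subset hmemu hmemv hxseg
    have hclosed : IsClosed (convexHull ℝ (Q ∪ ({u, v} : Set Pt))) :=
      Set.Finite.isClosed_convexHull ℝ (hQfin.union ((Set.finite_singleton v).insert u))
    rw [hclosed.frontier_eq]
    refine ⟨hxH, ?_⟩
    intro hxint
    obtain ⟨s, _, _, hxe⟩ := hseg x hxseg
    have hgx : g x = 0 := by
      rw [hgdef]
      simp only
      rw [hxe, add_sub_cancel_left, crossP_smul_self, mul_zero]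
    have hcx : crossP (v - u) (x - u) = 0 := by
      rw [hgdef] at hgx
      simp only at hgx
      exact (mul_eq_zero.mp hgx).resolve_left hc
    obtain ⟨ε, hε, hball⟩ := Metric.isOpen_iff.mp isOpen_interior x hxint
    have hwn : (0 : ℝ) < ‖w - u‖ := norm_pos_iff.mpr hwu
    set δ : ℝ := ε / (2 * ‖w - u‖) with hδdef
    have hδ : 0 < δ := div_pos hε (by positivity)
    set p : Pt := x - δ • (w - u) with hpdef
    have hpball : p ∈ Metric.ball x ε := by
      rw [Metric.mem_ball, dist_eq_norm]
      have h1 : p - x = -(δ • (w - u)) := by rw [hpdef]; abel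
      rw [h1, norm_neg, norm_smul, Real.norm_eq_abs, abs_of_pos hδ]
      rw [hδdef]
      rw [div_mul_eq_mul_div, mul_comm (2 : ℝ) ‖w - u‖, ← div_div, mul_div_assoc,
        div_self (ne_of_gt hwn), mul_one]
      linarith
    have hpH : p ∈ convexHull ℝ (Q ∪ ({u, v} : Set Pt)) :=
      interior_subset (hball hpball)
    have hnn := hH0 p hpH
    have hgp : g p = -(δ * (c * c)) := by
      rw [hgdef]
      simp only
      have h1 : p - u = (x - u) - δ • (w - u) := by rw [hpdef]; abel
      rw [h1, crossP_sub_smul, hcx, ← hcdef]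
      ring
    have hcc : 0 < c * c := mul_self_pos.mpr hc
    rw [hgp] at hnn
    nlinarith
  · -- hull inside triangle
    apply convexHull_min ?_ (convex_convexHull ℝ _)
    rintro p (hp | hp)
    · exact interior_subset (hQ hp)
    · rcases hp with rfl | rfl
      · exact subset_convexHull ℝ _ (by simp)
      · exact subset_convexHull ℝ _ (by simp)
  · -- no point of Q outside the hull
    intro q hq hmem
    exact hmem.2 (subset_convexHull ℝ _ (Or.inl hq))


end CHT6
end
end

section
/- Let u be a point and w a point in the cone C₀ of u (the cone of angular width π/3 around the upward vertical direction from u). Let T(u,w) be the equilateral triangle with apex u bounded by the two rays defining C₀ and the horizontal line through w, let m be the midpoint of the side of T(u,w) opposite u, and let α be the unsigned angle between segments uw and um. If the side length of T(u,w) is taken as 1, then the path length |ua| + |aw|, where a is the upper-left corner of T(u,w), equals (√3·cos α + sin α)·|uw| when w lies on the right half of the top side; in particular max(|ua|+|aw|, |ub|+|bw|) = (√3·cos α + sin α)·|uw| where a, b are the two top corners. -/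
open Real Set

noncomputable section

namespace CHT6


lemma dst_eq (p q : Pt) (c : ℝ) (hc : 0 ≤ c)
    (h : (p.1 - q.1) ^ 2 + (p.2 - q.2) ^ 2 = c ^ 2) : dst p q = c := by
  rw [dst, h, Real.sqrt_sq hc]

/-- For `w` in the upward cone `C₀` of `u`, with `a`, `b` the upper-left and upper-right
corners of the canonical triangle `T(u,w)`, `m` the midpoint of its top side, and
`α` the unsigned angle between `uw` and `um`: if `w` lies in the right half then
`|ua| + |aw| = (√3·cos α + sin α)·|uw|`, and in particular
`max(|ua| + |aw|, |ub| + |bw|) = (√3·cos α + sin α)·|uw|`. -/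
theorem stmt_6 (u w : Pt) (hcone : Real.sqrt 3 * |w.1 - u.1| < w.2 - u.2)
    (hright : u.1 ≤ w.1) (a b m : Pt)
    (ha : a = (u.1 - (w.2 - u.2) / Real.sqrt 3, w.2))
    (hb : b = (u.1 + (w.2 - u.2) / Real.sqrt 3, w.2))
    (hm : m = (u.1, w.2)) :
    dst u a + dst a w =
      (Real.sqrt 3 * Real.cos (ang w u m) + Real.sin (ang w u m)) * dst u w ∧
    max (dst u a + dst a w) (dst u b + dst b w) =
      (Real.sqrt 3 * Real.cos (ang w u m) + Real.sin (ang w u m)) * dst u w := by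
  subst ha hb hm
  have hs0 : (0:ℝ) < Real.sqrt 3 := Real.sqrt_pos.mpr (by norm_num)
  have hs2 : Real.sqrt 3 ^ 2 = 3 := Real.sq_sqrt (by norm_num)
  have hx0 : (0:ℝ) ≤ w.1 - u.1 := by linarith
  have hxy : Real.sqrt 3 * (w.1 - u.1) < w.2 - u.2 := by
    rwa [abs_of_nonneg hx0] at hcone
  have hy0 : (0:ℝ) < w.2 - u.2 := lt_of_le_of_lt (by positivity) hxy
  have hxys : w.1 - u.1 < (w.2 - u.2) / Real.sqrt 3 := by
    rw [lt_div_iff₀ hs0]; nlinarith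
  have h1 : dst u (u.1 - (w.2 - u.2) / Real.sqrt 3, w.2) = 2 * (w.2 - u.2) / Real.sqrt 3 := by
    apply dst_eq _ _ _ (by positivity)
    simp only
    field_simp
    nlinarith [hs2]
  have h2 : dst (u.1 - (w.2 - u.2) / Real.sqrt 3, w.2) w = (w.1 - u.1) + (w.2 - u.2) / Real.sqrt 3 := by
    apply dst_eq _ _ _ (by positivity)
    simp only
    ring
  have h3 : dst u (u.1 + (w.2 - u.2) / Real.sqrt 3, w.2) = 2 * (w.2 - u.2) / Real.sqrt 3 := by
    apply dst_eq _ _ _ (by positivity)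
    simp only
    field_simp
    nlinarith [hs2]
  have h4 : dst (u.1 + (w.2 - u.2) / Real.sqrt 3, w.2) w = (w.2 - u.2) / Real.sqrt 3 - (w.1 - u.1) := by
    apply dst_eq _ _ _ (by linarith)
    simp only
    ring
  have hd0 : 0 < Real.sqrt ((w.1 - u.1) ^ 2 + (w.2 - u.2) ^ 2) := Real.sqrt_pos.mpr (by positivity)
  have hd2 : Real.sqrt ((w.1 - u.1) ^ 2 + (w.2 - u.2) ^ 2) ^ 2 = (w.1 - u.1) ^ 2 + (w.2 - u.2) ^ 2 :=
    Real.sq_sqrt (by positivity)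
  have hyd : w.2 - u.2 ≤ Real.sqrt ((w.1 - u.1) ^ 2 + (w.2 - u.2) ^ 2) := by nlinarith
  have hduw : dst u w = Real.sqrt ((w.1 - u.1) ^ 2 + (w.2 - u.2) ^ 2) := by
    rw [dst, show (u.1 - w.1) ^ 2 + (u.2 - w.2) ^ 2 = (w.1 - u.1) ^ 2 + (w.2 - u.2) ^ 2 from by ring]
  have hdwu : dst w u = Real.sqrt ((w.1 - u.1) ^ 2 + (w.2 - u.2) ^ 2) := by
    rw [dst]
  have hdmu : dst (u.1, w.2) u = w.2 - u.2 := by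
    apply dst_eq _ _ _ hy0.le
    simp only
    ring
  have hang : ang w u (u.1, w.2) =
      Real.arccos ((w.2 - u.2) / Real.sqrt ((w.1 - u.1) ^ 2 + (w.2 - u.2) ^ 2)) := by
    rw [ang, hdwu, hdmu]
    congr 1
    simp only
    rw [div_eq_div_iff (by positivity) (ne_of_gt hd0)]
    ring
  have hbound : (w.2 - u.2) / Real.sqrt ((w.1 - u.1) ^ 2 + (w.2 - u.2) ^ 2) ≤ 1 := by
    rw [div_le_one hd0]; exact hyd
  have hbound' : (-1:ℝ) ≤ (w.2 - u.2) / Real.sqrt ((w.1 - u.1) ^ 2 + (w.2 - u.2) ^ 2) := by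
    have : (0:ℝ) ≤ (w.2 - u.2) / Real.sqrt ((w.1 - u.1) ^ 2 + (w.2 - u.2) ^ 2) := by positivity
    linarith
  have hcos : Real.cos (ang w u (u.1, w.2)) =
      (w.2 - u.2) / Real.sqrt ((w.1 - u.1) ^ 2 + (w.2 - u.2) ^ 2) := by
    rw [hang, Real.cos_arccos hbound' hbound]
  have hsin : Real.sin (ang w u (u.1, w.2)) =
      (w.1 - u.1) / Real.sqrt ((w.1 - u.1) ^ 2 + (w.2 - u.2) ^ 2) := by
    rw [hang, Real.sin_arccos]
    have h5 : 1 - ((w.2 - u.2) / Real.sqrt ((w.1 - u.1) ^ 2 + (w.2 - u.2) ^ 2)) ^ 2 =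
        ((w.1 - u.1) / Real.sqrt ((w.1 - u.1) ^ 2 + (w.2 - u.2) ^ 2)) ^ 2 := by
      field_simp
      linarith [hd2]
    rw [h5, Real.sqrt_sq (by positivity)]
  have key : dst u (u.1 - (w.2 - u.2) / Real.sqrt 3, w.2) +
      dst (u.1 - (w.2 - u.2) / Real.sqrt 3, w.2) w =
      (Real.sqrt 3 * Real.cos (ang w u (u.1, w.2)) + Real.sin (ang w u (u.1, w.2))) * dst u w := by
    rw [h1, h2, hcos, hsin, hduw]
    have hR : (Real.sqrt 3 * ((w.2 - u.2) / Real.sqrt ((w.1 - u.1) ^ 2 + (w.2 - u.2) ^ 2)) +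
        (w.1 - u.1) / Real.sqrt ((w.1 - u.1) ^ 2 + (w.2 - u.2) ^ 2)) *
        Real.sqrt ((w.1 - u.1) ^ 2 + (w.2 - u.2) ^ 2) =
        Real.sqrt 3 * (w.2 - u.2) + (w.1 - u.1) := by
      field_simp
    rw [hR]
    field_simp
    linear_combination (u.2 - w.2) * hs2
  refine ⟨key, ?_⟩
  rw [max_eq_left, key]
  rw [h1, h2, h3, h4]
  linarith

end CHT6
end
end

section
/- Let T₁ and T₂ be two downward-pointing equilateral triangles in the plane (i.e., triangles with one horizontal top side and apex below, all with the same orientation: their corresponding sides pairwise parallel). If T₁ and T₂ intersect, then at least one corner of one triangle is contained in the other triangle. -/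
open Real Set

noncomputable section

namespace CHT6

/-- The downward-pointing equilateral triangle with bottom apex `c` and side length `s`:
horizontal top side at height `c.2 + s·√3/2`. -/
def dTri (c : Pt) (s : ℝ) : Set Pt :=
  convexHull ℝ {c, (c.1 - s / 2, c.2 + s * Real.sqrt 3 / 2),
    (c.1 + s / 2, c.2 + s * Real.sqrt 3 / 2)}

/-- The three corners of that triangle. -/
def dCorners (c : Pt) (s : ℝ) : Set Pt :=
  {c, (c.1 - s / 2, c.2 + s * Real.sqrt 3 / 2), (c.1 + s / 2, c.2 + s * Real.sqrt 3 / 2)}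

private lemma sqrt3_pos : (0:ℝ) < Real.sqrt 3 := Real.sqrt_pos.2 (by norm_num)

private lemma mem_tri {A B C p : Pt} {w₀ w₁ w₂ : ℝ} (h₀ : 0 ≤ w₀) (h₁ : 0 ≤ w₁)
    (h₂ : 0 ≤ w₂) (hsum : w₀ + w₁ + w₂ = 1)
    (hp : p = w₀ • A + w₁ • B + w₂ • C) :
    p ∈ convexHull ℝ ({A, B, C} : Set Pt) := by
  have hA : A ∈ convexHull ℝ ({A,B,C} : Set Pt) := subset_convexHull ℝ _ (by simp)
  have hB : B ∈ convexHull ℝ ({A,B,C} : Set Pt) := subset_convexHull ℝ _ (by simp)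
  have hC : C ∈ convexHull ℝ ({A,B,C} : Set Pt) := subset_convexHull ℝ _ (by simp)
  have hconv := convex_convexHull ℝ ({A,B,C} : Set Pt)
  rcases eq_or_lt_of_le (add_nonneg h₁ h₂) with ht | ht
  · have hw1 : w₁ = 0 := by linarith
    have hw2 : w₂ = 0 := by linarith
    have hw0 : w₀ = 1 := by linarith
    rw [hp, hw0, hw1, hw2]
    simpa using hA
  · have htne : w₁ + w₂ ≠ 0 := ne_of_gt ht
    have hq : (w₁/(w₁+w₂)) • B + (w₂/(w₁+w₂)) • C ∈ convexHull ℝ ({A,B,C} : Set Pt) :=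
      hconv hB hC (by positivity) (by positivity) (by field_simp)
    have hfin := hconv hA hq h₀ (le_of_lt ht) (by linarith)
    have e1 : (w₁+w₂) * (w₁/(w₁+w₂)) = w₁ := by field_simp
    have e2 : (w₁+w₂) * (w₂/(w₁+w₂)) = w₂ := by field_simp
    rw [smul_add, smul_smul, smul_smul, e1, e2, ← add_assoc] at hfin
    rwa [hp]

private lemma mem_dTri_iff (c : Pt) {s : ℝ} (hs : 0 < s) (p : Pt) :
    p ∈ dTri c s ↔ p.2 ≤ c.2 + s * Real.sqrt 3 / 2 ∧
      Real.sqrt 3 * p.1 - p.2 ≤ Real.sqrt 3 * c.1 - c.2 ∧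
      -(Real.sqrt 3 * p.1) - p.2 ≤ -(Real.sqrt 3 * c.1) - c.2 := by
  have hr := sqrt3_pos
  set r := Real.sqrt 3 with hrdef
  constructor
  · intro hp
    have hsub : dTri c s ⊆ {q : Pt | q.2 ≤ c.2 + s * r / 2 ∧
        r * q.1 - q.2 ≤ r * c.1 - c.2 ∧ -(r * q.1) - q.2 ≤ -(r * c.1) - c.2} := by
      apply convexHull_min
      · rintro q (rfl | rfl | rfl)
        · refine ⟨by nlinarith, by linarith, by linarith⟩
        · refine ⟨by simp [hrdef], by simp; nlinarith, by simp; nlinarith⟩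
        · refine ⟨by simp [hrdef], by simp; nlinarith, by simp; nlinarith⟩
      · rintro x ⟨hx1, hx2, hx3⟩ y ⟨hy1, hy2, hy3⟩ a b ha hb hab
        simp only [Prod.fst_add, Prod.snd_add, Prod.smul_fst, Prod.smul_snd,
          smul_eq_mul, Set.mem_setOf_eq]
        have key : ∀ u v K : ℝ, u ≤ K → v ≤ K → a * u + b * v ≤ K := by
          intro u v K hu hv
          calc a * u + b * v ≤ a * K + b * K :=
                add_le_add (mul_le_mul_of_nonneg_left hu ha)
                  (mul_le_mul_of_nonneg_left hv hb)
            _ = K := by rw [← add_mul, hab, one_mul]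
        refine ⟨key _ _ _ hx1 hy1, ?_, ?_⟩
        · calc r * (a * x.1 + b * y.1) - (a * x.2 + b * y.2)
              = a * (r * x.1 - x.2) + b * (r * y.1 - y.2) := by ring
            _ ≤ _ := key _ _ _ hx2 hy2
        · calc -(r * (a * x.1 + b * y.1)) - (a * x.2 + b * y.2)
              = a * (-(r * x.1) - x.2) + b * (-(r * y.1) - y.2) := by ring
            _ ≤ _ := key _ _ _ hx3 hy3
    exact hsub hp
  · rintro ⟨h1, h2, h3⟩
    have hsr : (0:ℝ) < s * r := by positivity
    set w₀ : ℝ := 1 - 2 * (p.2 - c.2) / (s * r) with hw0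
    set w₁ : ℝ := ((p.2 - c.2) - r * (p.1 - c.1)) / (s * r) with hw1
    set w₂ : ℝ := ((p.2 - c.2) + r * (p.1 - c.1)) / (s * r) with hw2
    have h₀ : 0 ≤ w₀ := by
      rw [hw0, sub_nonneg, div_le_one hsr]; linarith
    have h₁ : 0 ≤ w₁ := div_nonneg (by linarith) (le_of_lt hsr)
    have h₂ : 0 ≤ w₂ := div_nonneg (by linarith) (le_of_lt hsr)
    have hsum : w₀ + w₁ + w₂ = 1 := by
      rw [hw0, hw1, hw2]; field_simp; ring
    refine mem_tri h₀ h₁ h₂ hsum ?_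
    have hsne : s ≠ 0 := ne_of_gt hs
    have hrne : r ≠ 0 := ne_of_gt hr
    apply Prod.ext <;>
      simp only [Prod.fst_add, Prod.snd_add, Prod.smul_fst, Prod.smul_snd,
        smul_eq_mul, hw0, hw1, hw2] <;> field_simp <;> ring

/-- If two downward-pointing equilateral triangles with pairwise parallel corresponding
sides intersect (in general position: no top side at the height of a corner of the other),
then a corner of one triangle is contained in the other. -/
theorem stmt_8 (c₁ c₂ : Pt) (s₁ s₂ : ℝ) (hs₁ : 0 < s₁) (hs₂ : 0 < s₂)
    (hgp₁ : c₁.2 + s₁ * Real.sqrt 3 / 2 ≠ c₂.2 + s₂ * Real.sqrt 3 / 2)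
    (hgp₂ : c₁.2 + s₁ * Real.sqrt 3 / 2 ≠ c₂.2)
    (hgp₃ : c₂.2 + s₂ * Real.sqrt 3 / 2 ≠ c₁.2)
    (hint : (dTri c₁ s₁ ∩ dTri c₂ s₂).Nonempty) :
    (∃ p ∈ dCorners c₁ s₁, p ∈ dTri c₂ s₂) ∨ (∃ p ∈ dCorners c₂ s₂, p ∈ dTri c₁ s₁) := by
  have hr := sqrt3_pos
  set r := Real.sqrt 3 with hrdef
  obtain ⟨p, hp₁, hp₂⟩ := hint
  rw [mem_dTri_iff c₁ hs₁] at hp₁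
  rw [mem_dTri_iff c₂ hs₂] at hp₂
  obtain ⟨ha1, ha2, ha3⟩ := hp₁
  obtain ⟨hb1, hb2, hb3⟩ := hp₂
  rcases le_total (r * c₁.1 - c₁.2) (r * c₂.1 - c₂.2) with h2 | h2 <;>
    rcases le_total (-(r * c₁.1) - c₁.2) (-(r * c₂.1) - c₂.2) with h3 | h3
  · -- apex of T₁ in T₂
    refine Or.inl ⟨c₁, by simp [dCorners], (mem_dTri_iff c₂ hs₂ _).2
      ⟨by linarith, by linarith, by linarith⟩⟩
  · -- mixed: a₂ ≤ b₂, b₃ ≤ a₃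
    rcases le_total (c₁.2 + s₁ * r / 2) (c₂.2 + s₂ * r / 2) with h1 | h1
    · -- top-right corner of T₁ in T₂
      refine Or.inl ⟨(c₁.1 + s₁ / 2, c₁.2 + s₁ * r / 2), by simp [dCorners, hrdef],
        (mem_dTri_iff c₂ hs₂ _).2 ⟨by simpa using h1, ?_, ?_⟩⟩ <;>
        simp only [] <;> linarith
    · -- top-left corner of T₂ in T₁
      refine Or.inr ⟨(c₂.1 - s₂ / 2, c₂.2 + s₂ * r / 2), by simp [dCorners, hrdef],
        (mem_dTri_iff c₁ hs₁ _).2 ⟨by simpa using h1, ?_, ?_⟩⟩ <;>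
        simp only [] <;> linarith
  · -- mixed: b₂ ≤ a₂, a₃ ≤ b₃
    rcases le_total (c₁.2 + s₁ * r / 2) (c₂.2 + s₂ * r / 2) with h1 | h1
    · -- top-left corner of T₁ in T₂
      refine Or.inl ⟨(c₁.1 - s₁ / 2, c₁.2 + s₁ * r / 2), by simp [dCorners, hrdef],
        (mem_dTri_iff c₂ hs₂ _).2 ⟨by simpa using h1, ?_, ?_⟩⟩ <;>
        simp only [] <;> linarith
    · -- top-right corner of T₂ in T₁
      refine Or.inr ⟨(c₂.1 + s₂ / 2, c₂.2 + s₂ * r / 2), by simp [dCorners, hrdef],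
        (mem_dTri_iff c₁ hs₁ _).2 ⟨by simpa using h1, ?_, ?_⟩⟩ <;>
        simp only [] <;> linarith
  · -- apex of T₂ in T₁
    refine Or.inr ⟨c₂, by simp [dCorners], (mem_dTri_iff c₁ hs₁ _).2
      ⟨by linarith, by linarith, by linarith⟩⟩

end CHT6
end
end
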